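/- For any family F of subsets of an n-element set X with n ≥ 2 that is separating, one can extract a minimal separating subfamily F' ⊆ F with ⌈log₂ n⌉ ≤ |F'| ≤ n − 1. -/

import Mathlib

/-- A family `F` of subsets of `X` is separating if for every pair of distinct
elements of `X` some member of `F` contains exactly one of them. -/
def SepFam {α : Type*} [DecidableEq α] (F : Finset (Finset α)) (X : Finset α) : Prop :=
  ∀ x ∈ X, ∀ y ∈ X, x ≠ y → ∃ S ∈ F, (x ∈ S ↔ y ∉ S)

/-- From non-separation of `F.erase T` plus separation of `F`, extract a pair
separated by `T` and by nothing else in `F`. -/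
lemma crit_pair {α : Type*} [DecidableEq α] {F : Finset (Finset α)} {X : Finset α}
    (hsep : SepFam F X) {T : Finset α} (hT : T ∈ F) (h : ¬ SepFam (F.erase T) X) :
    ∃ x ∈ X, ∃ y ∈ X, x ≠ y ∧ (x ∈ T ↔ y ∉ T) ∧ ∀ R ∈ F, R ≠ T → (x ∈ R ↔ y ∈ R) := by
  unfold SepFam at h
  push_neg at h
  obtain ⟨x, hx, y, hy, hxy, hall⟩ := h
  refine ⟨x, hx, y, hy, hxy, ?_, ?_⟩
  · obtain ⟨R, hR, hRsep⟩ := hsep x hx y hy hxy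
    rcases eq_or_ne R T with rfl | hne
    · exact hRsep
    · have := hall R (Finset.mem_erase.mpr ⟨hne, hR⟩)
      tauto
  · intro R hR hne
    have := hall R (Finset.mem_erase.mpr ⟨hne, hR⟩)
    by_cases h1 : x ∈ R <;> by_cases h2 : y ∈ R <;> tauto

/-- Bondy's theorem: a separating family in which every member is essential has
cardinality at most `|X| - 1`. -/
lemma bondy {α : Type*} [DecidableEq α] (n : ℕ) :
    ∀ (X : Finset α), X.card ≤ n → ∀ (F : Finset (Finset α)), SepFam F X →
      (∀ T ∈ F, ¬ SepFam (F.erase T) X) → F.card ≤ X.card - 1 := by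
  classical
  induction n with
  | zero =>
    intro X hXn F hsep hmin
    rcases F.eq_empty_or_nonempty with rfl | ⟨S, hS⟩
    · simp
    · obtain ⟨x, hx, _⟩ := crit_pair hsep hS (hmin S hS)
      have : X = ∅ := Finset.card_eq_zero.mp (Nat.le_zero.mp hXn)
      simp [this] at hx
  | succ n ih =>
    intro X hXn F hsep hmin
    rcases F.eq_empty_or_nonempty with rfl | ⟨S, hS⟩
    · simp
    obtain ⟨x0, hx0, y0, hy0, hxy0, hS0, honly0⟩ := crit_pair hsep hS (hmin S hS)
    -- B : points outside S that form an S-critical pair with some point of X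
    obtain ⟨B, hBmem⟩ : ∃ B : Finset α, ∀ v, v ∈ B ↔ v ∈ X ∧ v ∉ S ∧
        ∃ a ∈ X, a ≠ v ∧ (a ∈ S ↔ v ∉ S) ∧ ∀ R ∈ F, R ≠ S → (a ∈ R ↔ v ∈ R) :=
      ⟨X.filter (fun v => v ∉ S ∧ ∃ a ∈ X, a ≠ v ∧ (a ∈ S ↔ v ∉ S) ∧
        ∀ R ∈ F, R ≠ S → (a ∈ R ↔ v ∈ R)), fun v => Finset.mem_filter⟩
    have hBsub : B ⊆ X := fun v hv => ((hBmem v).mp hv).1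
    have hBnotS : ∀ v ∈ B, v ∉ S := fun v hv => ((hBmem v).mp hv).2.1
    -- B is nonempty
    have hBne : B.Nonempty := by
      by_cases hy : y0 ∈ S
      · have hx0S : x0 ∉ S := by tauto
        refine ⟨x0, (hBmem x0).mpr ⟨hx0, hx0S, y0, hy0, hxy0.symm, by tauto, ?_⟩⟩
        intro R hR hne
        exact (honly0 R hR hne).symm
      · refine ⟨y0, (hBmem y0).mpr ⟨hy0, hy, x0, hx0, hxy0, by tauto, honly0⟩⟩
    set X' := X \ B with hX'
    have hX'sub : X' ⊆ X := Finset.sdiff_subset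
    -- replacing a point of B by a point of X' agreeing with it on all R ≠ S
    have fixlem : ∀ w ∈ X, ∃ w' ∈ X', ∀ R ∈ F, R ≠ S → (w' ∈ R ↔ w ∈ R) := by
      intro w hw
      by_cases hwB : w ∈ B
      · obtain ⟨hwX, hwS, a, ha, hane, haS, hagree⟩ := (hBmem w).mp hwB
        have haInS : a ∈ S := by tauto
        have haB : a ∉ B := fun h => hBnotS a h haInS
        exact ⟨a, Finset.mem_sdiff.mpr ⟨ha, haB⟩, hagree⟩
      · exact ⟨w, Finset.mem_sdiff.mpr ⟨hw, hwB⟩, fun R _ _ => Iff.rfl⟩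
    -- the reduced family separates X'
    have hsep' : SepFam (F.erase S) X' := by
      intro a ha b hb hab
      by_contra hno
      push_neg at hno
      have hagree : ∀ R ∈ F, R ≠ S → (a ∈ R ↔ b ∈ R) := by
        intro R hR hne
        have := hno R (Finset.mem_erase.mpr ⟨hne, hR⟩)
        by_cases h1 : a ∈ R <;> by_cases h2 : b ∈ R <;> tauto
      obtain ⟨R, hR, hRsep⟩ := hsep a (hX'sub ha) b (hX'sub hb) hab
      have hRS : R = S := by
        by_contra hne
        have := hagree R hR hne
        tauto
      rw [hRS] at hRsep
      -- a, b form an S-critical pair; the one outside S lies in B, contradiction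
      by_cases haS : a ∈ S
      · have hbS : b ∉ S := by tauto
        have : b ∈ B := (hBmem b).mpr ⟨hX'sub hb, hbS, a, hX'sub ha, hab,
          by tauto, hagree⟩
        exact (Finset.mem_sdiff.mp hb).2 this
      · have hbS : b ∈ S := by tauto
        have : a ∈ B := (hBmem a).mpr ⟨hX'sub ha, haS, b, hX'sub hb, Ne.symm hab,
          by tauto, fun R hR hne => (hagree R hR hne).symm⟩
        exact (Finset.mem_sdiff.mp ha).2 this
    -- every member of the reduced family is essential on X'
    have hmin' : ∀ T ∈ F.erase S, ¬ SepFam ((F.erase S).erase T) X' := by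
      intro T hT
      obtain ⟨hTS, hTF⟩ := Finset.mem_erase.mp hT
      obtain ⟨u, hu, v, hv, huv, hTsep, hagree⟩ := crit_pair hsep hTF (hmin T hTF)
      obtain ⟨u', hu', hufix⟩ := fixlem u hu
      obtain ⟨v', hv', hvfix⟩ := fixlem v hv
      have huT : (u' ∈ T ↔ u ∈ T) := hufix T hTF hTS
      have hvT : (v' ∈ T ↔ v ∈ T) := hvfix T hTF hTS
      have hsepT : (u' ∈ T ↔ v' ∉ T) :=
        ⟨fun h hv => (hTsep.mp (huT.mp h)) (hvT.mp hv),
         fun h => huT.mpr (hTsep.mpr (fun hv => h (hvT.mpr hv)))⟩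
      have hne' : u' ≠ v' := by
        intro h; rw [h] at hsepT; exact iff_not_self hsepT
      intro hcon
      obtain ⟨R, hR, hRsep⟩ := hcon u' hu' v' hv' hne'
      obtain ⟨hRT, hR1⟩ := Finset.mem_erase.mp hR
      obtain ⟨hRS, hRF⟩ := Finset.mem_erase.mp hR1
      have h1 := hufix R hRF hRS
      have h2 := hvfix R hRF hRS
      have h3 := hagree R hRF hRT
      rw [h1, h2] at hRsep
      by_cases hu : u ∈ R
      · exact (hRsep.mp hu) (h3.mp hu)
      · exact hu (hRsep.mpr (fun hv => hu (h3.mpr hv)))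
    -- apply the inductive hypothesis
    have hX'lt : X'.card < X.card := by
      obtain ⟨b, hb⟩ := hBne
      exact Finset.card_lt_card ⟨hX'sub, fun hsub =>
        (Finset.mem_sdiff.mp (hsub (hBsub hb))).2 hb⟩
    have hIH := ih X' (by omega) (F.erase S) hsep' hmin'
    have hFc : F.card = (F.erase S).card + 1 := (Finset.card_erase_add_one hS).symm
    have hX2 : 2 ≤ X.card := Finset.one_lt_card.mpr ⟨x0, hx0, y0, hy0, hxy0⟩
    omega

/-- Any separating family on an `n`-element set (`n ≥ 2`) contains a minimal
separating subfamily `F'` with `⌈log₂ n⌉ ≤ |F'| ≤ n - 1`. -/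
theorem minimal_separating_subfamily {α : Type*} [DecidableEq α]
    (X : Finset α) (n : ℕ) (hn : 2 ≤ n) (hX : X.card = n)
    (F : Finset (Finset α)) (hsep : SepFam F X) :
    ∃ F' ⊆ F, SepFam F' X ∧ (∀ F'' ⊂ F', ¬ SepFam F'' X) ∧
      Nat.clog 2 n ≤ F'.card ∧ F'.card ≤ n - 1 := by
  classical
  set C := F.powerset.filter (fun G => SepFam G X) with hC
  have hFC : F ∈ C := Finset.mem_filter.mpr ⟨Finset.mem_powerset_self F, hsep⟩
  obtain ⟨F', hF'C, hminc⟩ := Finset.exists_min_image C Finset.card ⟨F, hFC⟩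
  obtain ⟨hF'pow, hF'sep⟩ := Finset.mem_filter.mp hF'C
  have hF'F : F' ⊆ F := Finset.mem_powerset.mp hF'pow
  have hminimal : ∀ F'' ⊂ F', ¬ SepFam F'' X := by
    intro F'' hss hsep''
    have : F'' ∈ C := Finset.mem_filter.mpr
      ⟨Finset.mem_powerset.mpr (hss.subset.trans hF'F), hsep''⟩
    exact absurd (hminc F'' this) (not_le.mpr (Finset.card_lt_card hss))
  refine ⟨F', hF'F, hF'sep, hminimal, ?_, ?_⟩
  · -- lower bound
    have hinj : Set.InjOn (fun x => F'.filter (x ∈ ·)) X := by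
      intro a ha b hb hab
      by_contra hne
      obtain ⟨R, hR, hRsep⟩ := hF'sep a ha b hb hne
      have hab' : F'.filter (a ∈ ·) = F'.filter (b ∈ ·) := hab
      have : (a ∈ R) ↔ (b ∈ R) := by
        constructor
        · intro h
          have h2 : R ∈ F'.filter (a ∈ ·) := Finset.mem_filter.mpr ⟨hR, h⟩
          rw [hab'] at h2
          exact (Finset.mem_filter.mp h2).2
        · intro h
          have h2 : R ∈ F'.filter (b ∈ ·) := Finset.mem_filter.mpr ⟨hR, h⟩
          rw [← hab'] at h2
          exact (Finset.mem_filter.mp h2).2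
      tauto
    have hcard : X.card ≤ F'.powerset.card := by
      apply Finset.card_le_card_of_injOn _ (fun a _ => Finset.mem_powerset.mpr
        (Finset.filter_subset _ _)) hinj
    rw [Finset.card_powerset] at hcard
    rw [Nat.clog_le_iff_le_pow one_lt_two]
    omega
  · -- upper bound via Bondy
    have hmin' : ∀ T ∈ F', ¬ SepFam (F'.erase T) X := fun T hT =>
      hminimal (F'.erase T) (Finset.erase_ssubset hT)
    have := bondy X.card X le_rfl F' hF'sep hmin'
    omega
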